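/- Let f, g be vectors in ℂ^ν with f·g* + g·f* positive semidefinite (where f·g* denotes the outer product, a ν×ν matrix). Then either g = 0, or there exists a complex number s with nonnegative real part such that f = s·g. -/

import Mathlib

open Matrix
open scoped ComplexOrder

private lemma vecMulVec_mulVec' {ν : ℕ} (a b x : Fin ν → ℂ) :
    Matrix.vecMulVec a b *ᵥ x = (b ⬝ᵥ x) • a := by
  funext i
  simp [Matrix.mulVec, Matrix.vecMulVec_apply, dotProduct, Finset.sum_mul]
  exact Finset.sum_congr rfl fun j _ => by ring

/-- Rantzer's lemma (right half-plane version): if `f·g* + g·f*` is positive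
semidefinite, then either `g = 0` or `f = s·g` for some `s` with `Re s ≥ 0`. -/
theorem stmt_7 (ν : ℕ) (f g : Fin ν → ℂ)
    (h : (Matrix.vecMulVec f (star g) + Matrix.vecMulVec g (star f)).PosSemidef) :
    g = 0 ∨ ∃ s : ℂ, 0 ≤ s.re ∧ f = s • g := by
  have key : ∀ x : Fin ν → ℂ,
      0 ≤ (star g ⬝ᵥ x) * (star x ⬝ᵥ f) + (star f ⬝ᵥ x) * (star x ⬝ᵥ g) := by
    intro x
    have := h.dotProduct_mulVec_nonneg x
    rwa [Matrix.add_mulVec, dotProduct_add, vecMulVec_mulVec',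
      vecMulVec_mulVec', dotProduct_smul, dotProduct_smul,
      smul_eq_mul, smul_eq_mul] at this
  by_cases hg : g = 0
  · exact Or.inl hg
  right
  set G : ℂ := star g ⬝ᵥ g with hG
  have hGne : G ≠ 0 := fun h0 => hg (dotProduct_star_self_eq_zero.mp h0)
  have hGpos : 0 < G := lt_of_le_of_ne (dotProduct_star_self_nonneg g) (Ne.symm hGne)
  have hGre : 0 < G.re := (Complex.lt_def.mp hGpos).1
  have hGim : G.im = 0 := ((Complex.lt_def.mp hGpos).2).symm
  have hGstar : (starRingEnd ℂ) G = G := Complex.conj_eq_iff_im.mpr hGim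
  set s : ℂ := (star g ⬝ᵥ f) / G with hs
  have hsG : star g ⬝ᵥ f = s * G := by
    rw [hs, div_mul_cancel₀ _ hGne]
  set u : Fin ν → ℂ := f - s • g with hu
  have hgu : star g ⬝ᵥ u = 0 := by
    simp [hu, dotProduct_sub, dotProduct_smul, hsG, smul_eq_mul]
    rw [← hG, sub_self]
  have hug : star u ⬝ᵥ g = 0 := by
    rw [Matrix.star_dotProduct, hgu, star_zero]
  have hfu : f = u + s • g := by simp [hu]
  -- show u = 0
  have hu0 : u = 0 := by
    by_contra hne
    set U : ℂ := star u ⬝ᵥ u with hU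
    have hUne : U ≠ 0 := fun h0 => hne (dotProduct_star_self_eq_zero.mp h0)
    have hUpos : 0 < U := lt_of_le_of_ne (dotProduct_star_self_nonneg u) (Ne.symm hUne)
    have hUre : 0 < U.re := (Complex.lt_def.mp hUpos).1
    have hUim : U.im = 0 := ((Complex.lt_def.mp hUpos).2).symm
    have hUstar : (starRingEnd ℂ) U = U := Complex.conj_eq_iff_im.mpr hUim
    -- choose ε
    set ε : ℝ := U.re / ((|s.re| + 1) * G.re) with hε
    have hεpos : 0 < ε := div_pos hUre (by positivity)
    set z : Fin ν → ℂ := u - (ε : ℂ) • g with hz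
    have hstarz : star z = star u - (ε : ℂ) • star g := by
      simp [hz, star_smul]
    have hgz : star g ⬝ᵥ z = -(ε : ℂ) * G := by
      simp [hz, dotProduct_sub, dotProduct_smul, hgu, smul_eq_mul]
      exact Or.inl hG.symm
    have hzf : star z ⬝ᵥ f = U - (ε : ℂ) * s * G := by
      rw [hstarz, sub_dotProduct, smul_dotProduct, hfu,
        dotProduct_add, dotProduct_add, dotProduct_smul,
        dotProduct_smul, hug, hgu, ← hU, ← hG]
      simp [smul_eq_mul]
      ring
    have hzg : star z ⬝ᵥ g = -(ε : ℂ) * G := by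
      rw [hstarz, sub_dotProduct, smul_dotProduct, hug, ← hG]
      simp [smul_eq_mul]
    have hfz : star f ⬝ᵥ z = U - (ε : ℂ) * (starRingEnd ℂ s) * G := by
      have h1 : star f ⬝ᵥ z = star (star z ⬝ᵥ f) := by
        rw [Matrix.star_dotProduct]
      rw [h1, hzf]
      rw [Complex.star_def, map_sub, _root_.map_mul, _root_.map_mul, hGstar, hUstar, Complex.conj_ofReal]
    have hk := key z
    rw [hgz, hzf, hfz, hzg] at hk
    have hre : (0:ℝ) ≤ (-(ε : ℂ) * G * (U - (ε : ℂ) * s * G)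
        + (U - (ε : ℂ) * (starRingEnd ℂ) s * G) * (-(ε : ℂ) * G)).re :=
      (Complex.le_def.mp hk).1
    have hval : (-(ε : ℂ) * G * (U - (ε : ℂ) * s * G)
        + (U - (ε : ℂ) * (starRingEnd ℂ) s * G) * (-(ε : ℂ) * G)).re
        = -2 * ε * G.re * U.re + 2 * ε ^ 2 * s.re * G.re ^ 2 := by
      simp [Complex.add_re, Complex.mul_re, Complex.sub_re, Complex.sub_im,
        Complex.mul_im, hGim, hUim, Complex.ofReal_re, Complex.ofReal_im]
      ring
    rw [hval] at hre
    -- derive contradiction: ε * s.re * G.re < U.re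
    have hlt : ε * s.re * G.re < U.re := by
      have h1 : ε * s.re * G.re ≤ ε * |s.re| * G.re :=
        mul_le_mul_of_nonneg_right
          (mul_le_mul_of_nonneg_left (le_abs_self s.re) hεpos.le) hGre.le
      have h2 : ε * |s.re| * G.re < U.re := by
        rw [hε, div_mul_eq_mul_div, div_mul_eq_mul_div, div_lt_iff₀ (by positivity)]
        nlinarith [abs_nonneg s.re, hUre, hGre]
      linarith
    have h3 := mul_lt_mul_of_pos_left hlt (show (0:ℝ) < 2 * ε * G.re by positivity)
    nlinarith [h3, hre]
  refine ⟨s, ?_, ?_⟩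
  · -- Re s ≥ 0 from key g
    have hk := key g
    have hfg : star f ⬝ᵥ g = (starRingEnd ℂ) s * G := by
      have h1 : star f ⬝ᵥ g = star (star g ⬝ᵥ f) := by
        rw [Matrix.star_dotProduct]
      rw [h1, hsG, Complex.star_def, _root_.map_mul, hGstar]
    rw [hsG, hfg, ← hG] at hk
    have hre : (0:ℝ) ≤ (G * (s * G) + (starRingEnd ℂ) s * G * G).re :=
      (Complex.le_def.mp hk).1
    have hval : (G * (s * G) + (starRingEnd ℂ) s * G * G).re = 2 * s.re * G.re ^ 2 := by
      simp [Complex.add_re, Complex.mul_re, Complex.mul_im, hGim]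
      ring
    rw [hval] at hre
    nlinarith [mul_pos hGre hGre]
  · exact sub_eq_zero.mp hu0
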